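/- Let p be an odd prime and m a positive integer with m ≤ p - 1. Then for every p-adic integer t, (m - tp)_k - (m)_k ≡ tp * (m)_k * (H_{m-1} - H_{m+k-1}) (mod p²) in ℤ_p, for all 0 ≤ k ≤ p - m. -/

import Mathlib

open Polynomial

private lemma norm_nat_le_one' (p : ℕ) [Fact p.Prime] (n : ℕ) : ‖(n : ℚ_[p])‖ ≤ 1 := by
  simpa using Padic.norm_int_le_one (p := p) n

private lemma norm_nat_eq_one' (p : ℕ) [Fact p.Prime] (n : ℕ) (h1 : 1 ≤ n) (h2 : n < p) :
    ‖(n : ℚ_[p])‖ = 1 := by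
  refine le_antisymm (norm_nat_le_one' p n) ?_
  by_contra h
  push_neg at h
  have : ‖((n : ℤ) : ℚ_[p])‖ < 1 := by simpa using h
  rw [Padic.norm_intCast_lt_one_iff] at this
  have hdvd : p ∣ n := by exact_mod_cast this
  exact Nat.not_dvd_of_pos_of_lt h1 h2 hdvd

private lemma padic_sub_le (p : ℕ) [Fact p.Prime] (a b : ℚ_[p]) :
    ‖a - b‖ ≤ max ‖a‖ ‖b‖ := by
  simpa [sub_eq_add_neg] using Padic.nonarchimedean a (-b)

private lemma norm_harmonic_le_one (p : ℕ) [Fact p.Prime] (n : ℕ) (hn : n < p) :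
    ‖((harmonic n : ℚ) : ℚ_[p])‖ ≤ 1 := by
  induction n with
  | zero => simp
  | succ k ih =>
    rw [harmonic_succ]
    push_cast
    refine le_trans (Padic.nonarchimedean _ _) (max_le (ih (by omega)) ?_)
    rw [norm_inv]
    have : ‖((k : ℚ_[p]) + 1)‖ = 1 := by
      have := norm_nat_eq_one' p (k + 1) (by omega) hn
      push_cast at this
      exact this
    rw [this]; norm_num

theorem pochhammer_shift_expansion (p : ℕ) [Fact p.Prime] (hp : Odd p)
    (m : ℕ) (hm1 : 1 ≤ m) (hm2 : m ≤ p - 1) (t : ℤ_[p]) (k : ℕ) (hk : k ≤ p - m) :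
    ‖(ascPochhammer ℚ_[p] k).eval ((m : ℚ_[p]) - t * p)
        - (ascPochhammer ℚ_[p] k).eval (m : ℚ_[p])
        - (t : ℚ_[p]) * p * (ascPochhammer ℚ_[p] k).eval (m : ℚ_[p])
            * ((harmonic (m - 1) - harmonic (m + k - 1) : ℚ) : ℚ_[p])‖
      ≤ (p : ℝ) ^ (-2 : ℤ) := by
  have hp2 : 2 ≤ p := (Fact.out : p.Prime).two_le
  have hppos : (0 : ℝ) < p := by exact_mod_cast (Fact.out : p.Prime).pos
  have hpinv : ((p : ℝ)⁻¹) ^ 2 = (p : ℝ) ^ (-2 : ℤ) := by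
    rw [inv_pow, ← zpow_natCast, ← zpow_neg]
    norm_num
  have htp : ‖(t : ℚ_[p]) * p‖ ≤ (p : ℝ)⁻¹ := by
    rw [norm_mul, Padic.norm_p]
    calc ‖(t : ℚ_[p])‖ * (p : ℝ)⁻¹ ≤ 1 * (p : ℝ)⁻¹ := by
          gcongr; exact t.norm_le_one
      _ = (p : ℝ)⁻¹ := one_mul _
  induction k with
  | zero =>
    simp
  | succ n ih =>
    have hn : n ≤ p - m := by omega
    have ihn := ih hn
    have hmn1 : m + n ≤ p - 1 := by omega
    set A := (ascPochhammer ℚ_[p] n).eval ((m : ℚ_[p]) - t * p) with hA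
    set B := (ascPochhammer ℚ_[p] n).eval (m : ℚ_[p]) with hB
    set S : ℚ := harmonic (m - 1) - harmonic (m + n - 1) with hS
    have hB_le : ‖B‖ ≤ 1 := by
      rw [hB, ← ascPochhammer_eval_cast]
      exact norm_nat_le_one' p _
    have hS_le : ‖(S : ℚ_[p])‖ ≤ 1 := by
      rw [hS]
      push_cast
      exact le_trans (padic_sub_le p _ _)
        (max_le (norm_harmonic_le_one p _ (by omega)) (norm_harmonic_le_one p _ (by omega)))
    have hharm : (harmonic (m + (n + 1) - 1) : ℚ) = harmonic (m + n - 1) + 1 / (m + n) := by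
      have h1 : m + (n + 1) - 1 = (m + n - 1) + 1 := by omega
      rw [h1, harmonic_succ, show m + n - 1 + 1 = m + n from by omega]
      push_cast
      ring
    have hmn_ne : ((m : ℚ_[p]) + n) ≠ 0 := by
      have : ((m + n : ℕ) : ℚ_[p]) ≠ 0 := Nat.cast_ne_zero.mpr (by omega)
      push_cast at this
      exact this
    rw [ascPochhammer_succ_right]
    simp only [eval_mul, eval_add, eval_X, eval_natCast]
    rw [hharm]
    have hgoal : (harmonic (m - 1) - ((harmonic (m + n - 1) : ℚ) + 1 / (m + n)) : ℚ)
        = S - 1 / (m + n) := by rw [hS]; ring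
    rw [hgoal]
    have key : A * ((m : ℚ_[p]) - t * p + n) - B * ((m : ℚ_[p]) + n)
        - (t : ℚ_[p]) * p * (B * ((m : ℚ_[p]) + n)) * ((S - 1 / (m + n) : ℚ) : ℚ_[p])
        = ((m : ℚ_[p]) + n - t * p) * (A - B - (t : ℚ_[p]) * p * B * (S : ℚ_[p]))
          - ((t : ℚ_[p]) * p) ^ 2 * B * (S : ℚ_[p]) := by
      push_cast
      field_simp
      ring
    rw [key]
    refine le_trans (padic_sub_le p _ _) (max_le ?_ ?_)
    · rw [norm_mul]
      calc ‖(m : ℚ_[p]) + n - t * p‖ * ‖A - B - (t : ℚ_[p]) * p * B * (S : ℚ_[p])‖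
          ≤ 1 * ((p : ℝ) ^ (-2 : ℤ)) := by
            refine mul_le_mul ?_ ihn (norm_nonneg _) zero_le_one
            refine le_trans (padic_sub_le p _ _) (max_le ?_ ?_)
            · have h := norm_nat_le_one' p (m + n)
              push_cast at h
              exact h
            · exact le_trans htp (by
                rw [inv_le_one₀ hppos]
                exact_mod_cast hp2.trans' (by norm_num))
        _ = (p : ℝ) ^ (-2 : ℤ) := one_mul _
    · rw [norm_mul, norm_mul, norm_pow]
      calc ‖(t : ℚ_[p]) * p‖ ^ 2 * ‖B‖ * ‖(S : ℚ_[p])‖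
          ≤ ((p : ℝ)⁻¹) ^ 2 * 1 * 1 := by
            refine mul_le_mul (mul_le_mul (pow_le_pow_left₀ (norm_nonneg _) htp 2)
              hB_le (norm_nonneg _) (by positivity)) hS_le (norm_nonneg _) (by positivity)
        _ = (p : ℝ) ^ (-2 : ℤ) := by rw [mul_one, mul_one, hpinv]
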